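/- Let n ≥ 1 and 0 < α < n. Then there is a constant C (depending only on n and α) such that for every f ∈ L¹(ℝⁿ) and every λ > 0, the Lebesgue measure of the set {x ∈ ℝⁿ : M_α f(x) > λ} is at most C (λ⁻¹ ‖f‖_{L¹(ℝⁿ)})^{n/(n−α)}. -/

import Mathlib

open MeasureTheory Metric Set
open scoped ENNReal NNReal

/-- The fractional maximal function `M_α f` on `ℝⁿ`:
`M_α f (x) = sup_{B ∋ x} |B|^{α/n - 1} ∫_B |f|`. -/
noncomputable def fracMax (n : ℕ) (α : ℝ) (f : EuclideanSpace ℝ (Fin n) → ℝ)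
    (x : EuclideanSpace ℝ (Fin n)) : ℝ≥0∞ :=
  ⨆ (c : EuclideanSpace ℝ (Fin n)) (r : ℝ) (_ : 0 < r) (_ : x ∈ ball c r),
    volume (ball c r) ^ (α / n - 1) * ∫⁻ y in ball c r, (‖f y‖₊ : ℝ≥0∞)

/-- The fractional maximal commutator `M_{α,b} f`:
`M_{α,b} f (x) = sup_{B ∋ x} |B|^{α/n - 1} ∫_B |b(x) - b(y)| |f(y)| dy`. -/
noncomputable def fracMaxComm (n : ℕ) (α : ℝ) (b f : EuclideanSpace ℝ (Fin n) → ℝ)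
    (x : EuclideanSpace ℝ (Fin n)) : ℝ≥0∞ :=
  ⨆ (c : EuclideanSpace ℝ (Fin n)) (r : ℝ) (_ : 0 < r) (_ : x ∈ ball c r),
    volume (ball c r) ^ (α / n - 1) *
      ∫⁻ y in ball c r, (‖b x - b y‖₊ : ℝ≥0∞) * (‖f y‖₊ : ℝ≥0∞)

/-- The local fractional maximal function `M_{α,B₀} f`, supremum over balls `B` with
`x ∈ B ⊆ B₀`. For `α = 0` this is the local Hardy–Littlewood maximal function `M_{B₀}`. -/
noncomputable def fracMaxLocal (n : ℕ) (α : ℝ) (B₀ : Set (EuclideanSpace ℝ (Fin n)))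
    (f : EuclideanSpace ℝ (Fin n) → ℝ) (x : EuclideanSpace ℝ (Fin n)) : ℝ≥0∞ :=
  ⨆ (c : EuclideanSpace ℝ (Fin n)) (r : ℝ) (_ : 0 < r) (_ : x ∈ ball c r)
    (_ : ball c r ⊆ B₀),
    volume (ball c r) ^ (α / n - 1) * ∫⁻ y in ball c r, (‖f y‖₊ : ℝ≥0∞)

/-- The average `b_B = |B|⁻¹ ∫_B b` of `b` over the ball `B = ball c r`. -/
noncomputable def ballAvg (n : ℕ) (b : EuclideanSpace ℝ (Fin n) → ℝ)
    (c : EuclideanSpace ℝ (Fin n)) (r : ℝ) : ℝ :=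
  (volume (ball c r)).toReal⁻¹ * ∫ y in ball c r, b y

set_option maxHeartbeats 1000000 in
/-- weak-type estimate for `M_α` at `p = 1`:
`|{x : M_α f (x) > λ}| ≤ C (λ⁻¹ ‖f‖_{L¹})^{n/(n-α)}`. -/
theorem stmt17 (n : ℕ) (hn : 1 ≤ n) (α : ℝ) (hα0 : 0 < α) (hαn : α < n) :
    ∃ C : ℝ, 0 ≤ C ∧
      ∀ f : EuclideanSpace ℝ (Fin n) → ℝ, Integrable f volume →
        ∀ lam : ℝ, 0 < lam →
          volume {x | ENNReal.ofReal lam < fracMax n α f x} ≤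
            ENNReal.ofReal
              (C * (lam⁻¹ * ∫ x, |f x|) ^ ((n : ℝ) / ((n : ℝ) - α))) := by
  classical
  haveI : Nonempty (Fin n) := ⟨⟨0, hn⟩⟩
  have hn0 : (0:ℝ) < n := by exact_mod_cast hn
  have hna : (0:ℝ) < (n:ℝ) - α := by linarith
  set p : ℝ := (n : ℝ) / ((n : ℝ) - α) with hp_def
  set β : ℝ := ((n : ℝ) - α) / (n : ℝ) with hβ_def
  have hβ0 : 0 < β := div_pos hna hn0
  have hβp : β * p = 1 := by rw [hβ_def, hp_def]; field_simp
  have hexp : α / (n:ℝ) - 1 = -β := by rw [hβ_def]; field_simp; ring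
  have hp1 : 1 ≤ p := by
    rw [hp_def, le_div_iff₀ hna]; linarith
  have hp0 : (0:ℝ) ≤ p := le_trans zero_le_one hp1
  refine ⟨4 ^ n, by positivity, ?_⟩
  intro f hf lam hlam
  set Λ := ENNReal.ofReal lam with hΛ
  have hΛ0 : Λ ≠ 0 := (ENNReal.ofReal_pos.mpr hlam).ne'
  have hΛt : Λ ≠ ∞ := ENNReal.ofReal_ne_top
  set N := ∫⁻ y, (‖f y‖₊ : ℝ≥0∞) with hN
  have hNt : N ≠ ∞ := hf.2.ne
  set E := {x | Λ < fracMax n α f x} with hE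
  by_cases hN0 : N = 0
  · have hEempty : E = (∅ : Set (EuclideanSpace ℝ (Fin n))) := by
      ext x
      simp only [hE, mem_setOf_eq, mem_empty_iff_false, iff_false, not_lt]
      have hfm : fracMax n α f x = 0 := by
        refine le_antisymm ?_ (zero_le)
        refine iSup_le fun c => iSup_le fun r => iSup_le fun hr => iSup_le fun hx => ?_
        have hI : ∫⁻ y in ball c r, (‖f y‖₊ : ℝ≥0∞) = 0 :=
          le_antisymm (hN0 ▸ setLIntegral_le_lintegral _ _) (zero_le)
        simp [hI]
      simp [hfm]
    rw [hEempty]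
    simp only [measure_empty]
    exact zero_le
  -- main case
  set t : Set (EuclideanSpace ℝ (Fin n) × ℝ) :=
    {q | 0 < q.2 ∧ Λ < volume (ball q.1 q.2) ^ (α / (n:ℝ) - 1) *
        ∫⁻ y in ball q.1 q.2, (‖f y‖₊ : ℝ≥0∞)} with ht
  have hIleN : ∀ (c : EuclideanSpace ℝ (Fin n)) (r : ℝ),
      (∫⁻ y in ball c r, (‖f y‖₊ : ℝ≥0∞)) ≤ N := fun c r =>
    setLIntegral_le_lintegral _ _
  have key : ∀ q ∈ t, volume (ball q.1 q.2) ≤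
      (Λ⁻¹ * ∫⁻ y in ball q.1 q.2, (‖f y‖₊ : ℝ≥0∞)) ^ p := by
    rintro ⟨c, r⟩ ⟨hr, hq⟩
    set V := volume (ball c r) with hV
    set I := ∫⁻ y in ball c r, (‖f y‖₊ : ℝ≥0∞) with hI
    have hV0 : V ≠ 0 := (measure_ball_pos _ _ hr).ne'
    have hVt : V ≠ ∞ := measure_ball_lt_top.ne
    rw [hexp] at hq
    have hVβ0 : V ^ β ≠ 0 := (ENNReal.rpow_pos (pos_iff_ne_zero.mpr hV0) hVt).ne'
    have hVβt : V ^ β ≠ ∞ := ENNReal.rpow_ne_top_of_nonneg hβ0.le hVt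
    have h1 : Λ * V ^ β < I := by
      have h2 := ENNReal.mul_lt_mul_left hVβ0 hVβt hq
      calc Λ * V ^ β < V ^ (-β) * I * V ^ β := h2
        _ = V ^ (-β) * V ^ β * I := by ring
        _ = I := by
            rw [← ENNReal.rpow_add _ _ hV0 hVt, neg_add_cancel, ENNReal.rpow_zero, one_mul]
    have h3 : V ^ β ≤ Λ⁻¹ * I := by
      calc V ^ β = Λ⁻¹ * (Λ * V ^ β) := by
            rw [← mul_assoc, ENNReal.inv_mul_cancel hΛ0 hΛt, one_mul]
        _ ≤ Λ⁻¹ * I := mul_le_mul_right h1.le _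
    calc V = (V ^ β) ^ p := by
          rw [← ENNReal.rpow_mul, hβp, ENNReal.rpow_one]
      _ ≤ (Λ⁻¹ * I) ^ p := ENNReal.rpow_le_rpow h3 hp0
  -- uniform bound on volumes and radii
  set Vmax : ℝ≥0∞ := (Λ⁻¹ * N) ^ p with hVmax
  have hVmaxt : Vmax ≠ ∞ :=
    ENNReal.rpow_ne_top_of_nonneg hp0
      (ENNReal.mul_ne_top (ENNReal.inv_ne_top.mpr hΛ0) hNt)
  have hVle : ∀ q ∈ t, volume (ball q.1 q.2) ≤ Vmax := by
    intro q hq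
    refine le_trans (key q hq) (ENNReal.rpow_le_rpow (mul_le_mul_right (hIleN _ _) _) hp0)
  set u1 : ℝ≥0∞ := volume (ball (0 : EuclideanSpace ℝ (Fin n)) 1) with hu1
  have hu10 : u1 ≠ 0 := (measure_ball_pos _ _ one_pos).ne'
  have hu1t : u1 ≠ ∞ := measure_ball_lt_top.ne
  set R : ℝ := ((Vmax / u1).toReal) ^ ((n:ℝ)⁻¹) with hR_def
  have hrR : ∀ q ∈ t, q.2 ≤ R := by
    rintro ⟨c, r⟩ hq
    have hr : 0 < r := hq.1
    have hvol : volume (ball c r) = ENNReal.ofReal (r ^ n) * u1 := by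
      rw [hu1, Measure.addHaar_ball volume c hr.le, finrank_euclideanSpace_fin]
    have h4 : ENNReal.ofReal (r ^ n) ≤ Vmax / u1 := by
      rw [ENNReal.le_div_iff_mul_le (Or.inl hu10) (Or.inl hu1t)]
      rw [← hvol]
      exact hVle (c, r) hq
    have h5 : r ^ n ≤ (Vmax / u1).toReal := by
      have h6 := ENNReal.toReal_mono (ENNReal.div_lt_top hVmaxt hu10).ne h4
      rwa [ENNReal.toReal_ofReal (by positivity)] at h6
    calc r = (r ^ n) ^ ((n:ℝ)⁻¹) := by
          rw [← Real.rpow_natCast r n, ← Real.rpow_mul hr.le,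
            mul_inv_cancel₀ (by exact_mod_cast hn0.ne'), Real.rpow_one]
      _ ≤ R := Real.rpow_le_rpow (by positivity) h5 (by positivity)
  obtain ⟨u, hut, hdisj, hcov⟩ :=
    Vitali.exists_disjoint_subfamily_covering_enlargement_closedBall t Prod.fst Prod.snd R
      hrR 4 (by norm_num)
  have hEcov : E ⊆ ⋃ q ∈ u, closedBall q.1 (4 * q.2) := by
    intro x hx
    simp only [hE, mem_setOf_eq, fracMax, lt_iSup_iff] at hx
    obtain ⟨c, r, hr, hxball, hlt⟩ := hx
    have hqt : ((c, r) : EuclideanSpace ℝ (Fin n) × ℝ) ∈ t := ⟨hr, hlt⟩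
    obtain ⟨q, hqu, hsub⟩ := hcov (c, r) hqt
    exact mem_biUnion hqu (hsub (ball_subset_closedBall hxball))
  have hdisj' : Pairwise (Function.onFun Disjoint
      fun q : u => ball (q : EuclideanSpace ℝ (Fin n) × ℝ).1
        (q : EuclideanSpace ℝ (Fin n) × ℝ).2) := by
    intro i j hij
    exact ((hdisj i.2 j.2 (fun h => hij (Subtype.ext h))).mono
      ball_subset_closedBall ball_subset_closedBall)
  have hucnt : u.Countable := by
    have hcball : Pairwise (Function.onFun Disjoint
        fun q : u => closedBall (q : EuclideanSpace ℝ (Fin n) × ℝ).1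
          (q : EuclideanSpace ℝ (Fin n) × ℝ).2) := by
      intro i j hij
      exact hdisj i.2 j.2 (fun h => hij (Subtype.ext h))
    have h := MeasureTheory.Measure.countable_meas_pos_of_disjoint_iUnion
      (μ := volume) (fun _ : u => measurableSet_closedBall) hcball
    have huniv : {i : u | 0 < volume (closedBall (i : EuclideanSpace ℝ (Fin n) × ℝ).1
        (i : EuclideanSpace ℝ (Fin n) × ℝ).2)} = univ := by
      ext i
      simp only [mem_setOf_eq, mem_univ, iff_true]
      exact measure_pos_of_superset (ball_subset_closedBall)
        (measure_ball_pos _ _ (hut i.2).1).ne'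
    rw [huniv] at h
    rw [← Set.countable_coe_iff]
    exact Set.countable_univ_iff.mp h
  haveI := hucnt.to_subtype
  have hscale : ∀ (c : EuclideanSpace ℝ (Fin n)) (r : ℝ), 0 < r →
      volume (closedBall c (4 * r)) = ENNReal.ofReal (4 ^ n) * volume (ball c r) := by
    intro c r hr
    rw [Measure.addHaar_closedBall volume c (by positivity : (0:ℝ) ≤ 4 * r),
      Measure.addHaar_ball volume c hr.le, finrank_euclideanSpace_fin,
      mul_pow, ENNReal.ofReal_mul (by positivity), mul_assoc]
  have hterm : ∀ q : u, volume (ball (q : EuclideanSpace ℝ (Fin n) × ℝ).1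
      (q : EuclideanSpace ℝ (Fin n) × ℝ).2) ≤
      Λ⁻¹ ^ p * (N ^ (p - 1) *
        ∫⁻ y in ball (q : EuclideanSpace ℝ (Fin n) × ℝ).1
          (q : EuclideanSpace ℝ (Fin n) × ℝ).2, (‖f y‖₊ : ℝ≥0∞)) := by
    rintro ⟨q, hqu⟩
    set I := ∫⁻ y in ball q.1 q.2, (‖f y‖₊ : ℝ≥0∞) with hI
    have hIN : I ≤ N := hIleN _ _
    have hIp : I ^ p ≤ N ^ (p - 1) * I := by
      by_cases hI0 : I = 0
      · rw [hI0, ENNReal.zero_rpow_of_pos (by linarith), mul_zero]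
      · have hIt : I ≠ ∞ := (lt_of_le_of_lt hIN (lt_of_le_of_ne le_top hNt)).ne
        calc I ^ p = I ^ (p - 1) * I := by
              conv_lhs => rw [show p = (p - 1) + 1 by ring]
              rw [ENNReal.rpow_add _ _ hI0 hIt, ENNReal.rpow_one]
          _ ≤ N ^ (p - 1) * I :=
              mul_le_mul_left (ENNReal.rpow_le_rpow hIN (by linarith)) _
    calc volume (ball q.1 q.2) ≤ (Λ⁻¹ * I) ^ p := key q (hut hqu)
      _ = Λ⁻¹ ^ p * I ^ p := ENNReal.mul_rpow_of_nonneg _ _ hp0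
      _ ≤ Λ⁻¹ ^ p * (N ^ (p - 1) * I) := mul_le_mul_right hIp _
  have hsumI : (∑' q : u, ∫⁻ y in ball (q : EuclideanSpace ℝ (Fin n) × ℝ).1
      (q : EuclideanSpace ℝ (Fin n) × ℝ).2, (‖f y‖₊ : ℝ≥0∞)) ≤ N := by
    exact le_trans (lintegral_iUnion (μ := volume) (f := fun y => (‖f y‖₊ : ℝ≥0∞))
      (fun _ => measurableSet_ball) hdisj').symm.le
      (setLIntegral_le_lintegral _ _)
  have hNp : N ^ (p - 1) * N = N ^ p := by
    conv_rhs => rw [show p = (p - 1) + 1 by ring]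
    rw [ENNReal.rpow_add _ _ hN0 hNt, ENNReal.rpow_one]
  have main : volume E ≤ ENNReal.ofReal (4 ^ n) * ((Λ⁻¹ * N) ^ p) := by
    calc volume E ≤ volume (⋃ q ∈ u, closedBall q.1 (4 * q.2)) := measure_mono hEcov
      _ ≤ ∑' q : u, volume (closedBall (q : EuclideanSpace ℝ (Fin n) × ℝ).1
          (4 * (q : EuclideanSpace ℝ (Fin n) × ℝ).2)) :=
          measure_biUnion_le _ hucnt _
      _ = ∑' q : u, ENNReal.ofReal (4 ^ n) *
          volume (ball (q : EuclideanSpace ℝ (Fin n) × ℝ).1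
            (q : EuclideanSpace ℝ (Fin n) × ℝ).2) := by
          refine tsum_congr fun q => hscale _ _ (hut q.2).1
      _ ≤ ∑' q : u, ENNReal.ofReal (4 ^ n) * (Λ⁻¹ ^ p * (N ^ (p - 1) *
          ∫⁻ y in ball (q : EuclideanSpace ℝ (Fin n) × ℝ).1
            (q : EuclideanSpace ℝ (Fin n) × ℝ).2, (‖f y‖₊ : ℝ≥0∞))) :=
          ENNReal.tsum_le_tsum fun q => mul_le_mul_right (hterm q) _
      _ = ENNReal.ofReal (4 ^ n) * (Λ⁻¹ ^ p * N ^ (p - 1)) *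
          ∑' q : u, ∫⁻ y in ball (q : EuclideanSpace ℝ (Fin n) × ℝ).1
            (q : EuclideanSpace ℝ (Fin n) × ℝ).2, (‖f y‖₊ : ℝ≥0∞) := by
          rw [← ENNReal.tsum_mul_left]
          refine tsum_congr fun q => by ring
      _ ≤ ENNReal.ofReal (4 ^ n) * (Λ⁻¹ ^ p * N ^ (p - 1)) * N :=
          mul_le_mul_right hsumI _
      _ = ENNReal.ofReal (4 ^ n) * ((Λ⁻¹ * N) ^ p) := by
          rw [ENNReal.mul_rpow_of_nonneg _ _ hp0, ← hNp]; ring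
  refine le_trans main (le_of_eq ?_)
  have hint : ∫ x, |f x| = N.toReal := by
    rw [hN]
    simp_rw [← Real.norm_eq_abs]
    exact integral_norm_eq_lintegral_enorm hf.1
  rw [hint]
  have hΛinv : Λ⁻¹ = ENNReal.ofReal lam⁻¹ := by
    rw [hΛ, ← ENNReal.ofReal_inv_of_pos hlam]
  rw [hΛinv, ← ENNReal.ofReal_toReal hNt, ← ENNReal.ofReal_mul (by positivity),
    ENNReal.ofReal_rpow_of_nonneg (by positivity) hp0,
    ← ENNReal.ofReal_mul (by positivity), ENNReal.toReal_ofReal ENNReal.toReal_nonneg]
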